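/- Special case (a = 2n+1, b = n) of MacMahon's identity: for every natural number n ≥ 1, the determinant of the n×n matrix with entries C(2n+1+i, n+j), 1 ≤ i,j ≤ n, equals (3n+1)!!·(n-1)!!·n!!·n!! / ( (2n+1)!!·(2n)!!·(2n)!! ), where m!! = 1!·2!·⋯·m! is the superfactorial. -/

import Mathlib

def superfactorial (m : ℕ) : ℕ := ∏ k ∈ Finset.range m, Nat.factorial (k + 1)

lemma superfactorial_eq_superFactorial (m : ℕ) :
    superfactorial m = Nat.superFactorial m := by
  induction m with
  | zero => rfl
  | succ k ih =>
      rw [superfactorial, Finset.prod_range_succ, ← superfactorial, ih,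
        Nat.superFactorial_succ, mul_comm]

lemma superfactorial_pos (m : ℕ) : 0 < superfactorial m :=
  Finset.prod_pos (fun _ _ => Nat.factorial_pos _)

lemma superfactorial_add (a b : ℕ) :
    superfactorial (a + b)
      = superfactorial a * ∏ k ∈ Finset.range b, Nat.factorial (a + k + 1) := by
  rw [superfactorial, Finset.prod_range_add, ← superfactorial]

theorem macmahon_special_case (n : ℕ) (hn : 1 ≤ n) :
    Matrix.det (fun i j : Fin n =>
        ((Nat.choose (2 * n + 1 + i + 1) (n + j + 1) : ℕ) : ℚ)) =
      ((superfactorial (3 * n + 1) * superfactorial (n - 1) *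
          superfactorial n * superfactorial n : ℕ) : ℚ) /
        ((superfactorial (2 * n + 1) * superfactorial (2 * n) *
          superfactorial (2 * n) : ℕ) : ℚ) := by
  obtain ⟨m, rfl⟩ : ∃ m, n = m + 1 := ⟨n - 1, by omega⟩
  set n := m + 1 with hnm
  -- the polynomial family
  set p : Fin n → Polynomial ℚ :=
    fun j => ∏ s ∈ Finset.range (j : ℕ), (Polynomial.X + Polynomial.C ((n + 1 - s : ℕ) : ℚ))
    with hp
  have hp_monic : ∀ j : Fin n, (p j).Monic := fun j =>
    Polynomial.monic_prod_of_monic _ _ (fun s _ => Polynomial.monic_X_add_C _)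
  have hp_deg : ∀ j : Fin n, (p j).natDegree = (j : ℕ) := by
    intro j
    rw [hp, Polynomial.natDegree_prod_of_monic _ _ (fun s _ => Polynomial.monic_X_add_C _),
      Finset.sum_congr rfl (fun s _ => Polynomial.natDegree_X_add_C _),
      Finset.sum_const, Finset.card_range, smul_eq_mul, mul_one]
  -- evaluation of p j at i gives the descFactorial
  have hp_eval : ∀ i j : Fin n,
      (p j).eval ((i : ℕ) : ℚ) = ((Nat.descFactorial (n + i + 1) j : ℕ) : ℚ) := by
    intro i j
    rw [hp, Polynomial.eval_prod, Nat.descFactorial_eq_prod_range, Nat.cast_prod]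
    apply Finset.prod_congr rfl
    intro s hs
    have hs' : s < n := lt_of_lt_of_le (Finset.mem_range.mp hs) (by omega)
    simp only [Polynomial.eval_add, Polynomial.eval_X, Polynomial.eval_C]
    rw [show (n + (i:ℕ) + 1) - s = (i:ℕ) + (n + 1 - s) from by omega, Nat.cast_add]
  -- entrywise factorization
  have key : (fun i j : Fin n =>
        ((Nat.choose (2 * n + 1 + i + 1) (n + j + 1) : ℕ) : ℚ))
      = Matrix.of (fun i j : Fin n =>
          (((n + (j:ℕ) + 1).factorial : ℚ))⁻¹ *
          (Matrix.of (fun i j : Fin n =>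
            (((2 * n + 1 + (i:ℕ) + 1).factorial : ℚ) / ((n + (i:ℕ) + 1).factorial : ℚ)) *
            (Matrix.of (fun i j : Fin n => (p j).eval ((i : ℕ) : ℚ))) i j) i j)) := by
    funext i j
    simp only [Matrix.of_apply]
    rw [hp_eval i j]
    have hnat : Nat.choose (2 * n + 1 + i + 1) (n + j + 1)
        * ((n + (i:ℕ) + 1).factorial * (n + (j:ℕ) + 1).factorial)
        = (2 * n + 1 + (i:ℕ) + 1).factorial * Nat.descFactorial (n + i + 1) j := by
      have h1 : n + (j:ℕ) + 1 ≤ 2 * n + 1 + (i:ℕ) + 1 := by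
        have := j.isLt; omega
      have h2 := Nat.choose_mul_factorial_mul_factorial h1
      have h3 : (j : ℕ) ≤ n + (i:ℕ) + 1 := by have := j.isLt; omega
      have h4 := Nat.factorial_mul_descFactorial h3
      have h5 : 2 * n + 1 + (i:ℕ) + 1 - (n + (j:ℕ) + 1) = n + (i:ℕ) + 1 - (j:ℕ) := by omega
      rw [h5] at h2
      calc Nat.choose (2 * n + 1 + i + 1) (n + j + 1)
            * ((n + (i:ℕ) + 1).factorial * (n + (j:ℕ) + 1).factorial)
          = Nat.choose (2 * n + 1 + i + 1) (n + j + 1)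
            * (((n + (i:ℕ) + 1 - j).factorial * Nat.descFactorial (n + i + 1) j)
              * (n + (j:ℕ) + 1).factorial) := by rw [h4]
        _ = (Nat.choose (2 * n + 1 + i + 1) (n + j + 1) * (n + (j:ℕ) + 1).factorial
              * (n + (i:ℕ) + 1 - j).factorial) * Nat.descFactorial (n + i + 1) j := by ring
        _ = (2 * n + 1 + (i:ℕ) + 1).factorial * Nat.descFactorial (n + i + 1) j := by rw [h2]
    have hfi : ((n + (i:ℕ) + 1).factorial : ℚ) ≠ 0 := by positivity
    have hfj : ((n + (j:ℕ) + 1).factorial : ℚ) ≠ 0 := by positivity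
    have hq : ((Nat.choose (2 * n + 1 + i + 1) (n + j + 1) : ℕ) : ℚ)
        * (((n + (i:ℕ) + 1).factorial : ℚ) * ((n + (j:ℕ) + 1).factorial : ℚ))
        = (((2 * n + 1 + (i:ℕ) + 1).factorial : ℕ) : ℚ)
          * ((Nat.descFactorial (n + i + 1) j : ℕ) : ℚ) := by exact_mod_cast hnat
    field_simp
    linear_combination hq
  rw [key, Matrix.det_mul_row, Matrix.det_mul_column]
  rw [show (Matrix.of (fun i j : Fin n => (p j).eval ((i : ℕ) : ℚ))).det
      = (Matrix.vandermonde (fun i : Fin n => ((i : ℕ) : ℚ))).det from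
    (Matrix.det_eval_matrixOfPolynomials_eq_det_vandermonde _ p hp_deg hp_monic).symm]
  have hvdm : (Matrix.vandermonde (fun i : Fin n => ((i : ℕ) : ℚ))).det
      = (Nat.superFactorial m : ℚ) := by
    have h := Matrix.det_vandermonde_id_eq_superFactorial (R := ℚ) m
    convert h using 2
  rw [hvdm]
  -- now pure product arithmetic
  rw [Fin.prod_univ_eq_prod_range (fun i => (((n + i + 1).factorial : ℚ))⁻¹) n,
    Fin.prod_univ_eq_prod_range
      (fun i => (((2 * n + 1 + i + 1).factorial : ℚ) / ((n + i + 1).factorial : ℚ))) n]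
  set A : ℕ := ∏ i ∈ Finset.range n, (2 * n + 1 + i + 1).factorial with hA
  set B : ℕ := ∏ i ∈ Finset.range n, (n + i + 1).factorial with hB
  have hprod1 : (∏ i ∈ Finset.range n, (((n + i + 1).factorial : ℚ))⁻¹) = ((B : ℚ))⁻¹ := by
    rw [hB, Nat.cast_prod, ← Finset.prod_inv_distrib]
  have hprod2 : (∏ i ∈ Finset.range n,
      (((2 * n + 1 + i + 1).factorial : ℚ) / ((n + i + 1).factorial : ℚ)))
      = (A : ℚ) / (B : ℚ) := by
    rw [hA, hB, Nat.cast_prod, Nat.cast_prod, ← Finset.prod_div_distrib]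
  rw [hprod1, hprod2]
  have h31 : superfactorial (3 * n + 1) = superfactorial (2 * n + 1) * A := by
    rw [show 3 * n + 1 = (2 * n + 1) + n from by ring, superfactorial_add, hA]
  have h2n : superfactorial (2 * n) = superfactorial n * B := by
    rw [show 2 * n = n + n from by ring, superfactorial_add, hB]
  have hm : superfactorial (n - 1) = Nat.superFactorial m := by
    rw [show n - 1 = m from by omega, superfactorial_eq_superFactorial]
  rw [h31, h2n, hm]
  have hBne : (B : ℚ) ≠ 0 := by
    have : 0 < B := Finset.prod_pos (fun _ _ => Nat.factorial_pos _)
    positivity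
  have hs1 : ((superfactorial (2 * n + 1) : ℕ) : ℚ) ≠ 0 := by
    have := superfactorial_pos (2 * n + 1); positivity
  have hs2 : ((superfactorial n : ℕ) : ℚ) ≠ 0 := by
    have := superfactorial_pos n; positivity
  push_cast
  field_simp
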